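/- In the modal system T extended with axioms b3 ((ψ|φ) → (φ → ψ)) and b4 (¬(¬ψ|φ) ↔ (ψ|φ)), one can derive ⊢ φ → ((ψ|φ) ↔ ψ), and hence ⊢ □φ → □((ψ|φ) ↔ ψ); in the semantic formulation: in any conditional model (W,M,h,f) with β3 and β4, one has A ∩ f(B,A) = A ∩ B, and if A = W then f(B,A) = B. -/
import Mathlib

/-- Semantic 'full universe' theorem: in any conditional model with β3 and β4,
`A ∩ f(B,A) = A ∩ B`, and conditioning on the full universe is trivial:
`f(B, W) = B`. -/
theorem cond_model_full_universe {W : Type*} (M : Set (Set W))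
    (hM_univ : (Set.univ : Set W) ∈ M)
    (hM_inter : ∀ A ∈ M, ∀ B ∈ M, A ∩ B ∈ M)
    (hM_compl : ∀ A ∈ M, Aᶜ ∈ M)
    (f : Set W → Set W → Set W)
    (hf : ∀ A ∈ M, ∀ B ∈ M, f B A ∈ M)
    (hβ3 : ∀ A ∈ M, ∀ B ∈ M, A ∩ f B A ⊆ B)
    (hβ4 : ∀ A ∈ M, ∀ B ∈ M, f Bᶜ A = (f B A)ᶜ) :
    (∀ A ∈ M, ∀ B ∈ M, A ∩ f B A = A ∩ B) ∧
    (∀ B ∈ M, f B Set.univ = B) := by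
  have key : ∀ A ∈ M, ∀ B ∈ M, A ∩ f B A = A ∩ B := by
    intro A hA B hB
    apply Set.Subset.antisymm
    · exact Set.subset_inter Set.inter_subset_left (hβ3 A hA B hB)
    · intro x hx
      refine ⟨hx.1, ?_⟩
      by_contra h
      have h2 := hβ3 A hA Bᶜ (hM_compl B hB) ⟨hx.1, by rw [hβ4 A hA B hB]; exact h⟩
      exact h2 hx.2
  refine ⟨key, fun B hB => ?_⟩
  have := key Set.univ hM_univ B hB
  simpa using this
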